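/- arXiv:2003.12269 — 3 statements merged into one kernel-verified Lean document; each statement's English description precedes it below -/
import Mathlib

section
/- Let B be a commutative ring, p a prime, and I ⊆ B an ideal with Iᵐ = 0. Then the ideal W_n(I) = {(x₀,…,x_{n-1}) ∈ W_n(B) : xᵢ ∈ I for all i} of the length-n p-typical Witt vectors W_n(B) is nilpotent. -/
open MvPolynomial Finset in
lemma aux_aeval_four {σ : Type*} {B : Type*} [CommRing B]
    (φ : MvPolynomial σ ℤ) (v : σ → B) (S : σ → Prop) [DecidablePred S]
    (I₁ I₂ : Ideal B) (h1 : ∀ s, S s → v s ∈ I₁) (h2 : ∀ s, ¬ S s → v s ∈ I₂) :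
    aeval v φ - aeval (fun s => if S s then v s else 0) φ
      - aeval (fun s => if S s then 0 else v s) φ + aeval (fun _ => (0 : B)) φ
      ∈ I₁ * I₂ := by
  classical
  have key : ∀ (w : σ → B), aeval w φ = ∑ d ∈ φ.support,
      algebraMap ℤ B (coeff d φ) * ∏ i ∈ d.support, w i ^ d i := by
    intro w
    rw [aeval_def, eval₂_eq]
  rw [key, key, key, key, ← Finset.sum_sub_distrib, ← Finset.sum_sub_distrib,
    ← Finset.sum_add_distrib]
  refine Ideal.sum_mem _ fun d _ => ?_
  by_cases hS1 : ∃ i ∈ d.support, S i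
  · by_cases hS2 : ∃ j ∈ d.support, ¬ S j
    · obtain ⟨i₀, hi₀, hi₀S⟩ := hS1
      obtain ⟨j₀, hj₀, hj₀S⟩ := hS2
      have hne : i₀ ≠ j₀ := fun h => hj₀S (h ▸ hi₀S)
      have e1 : ∏ i ∈ d.support, (if S i then v i else 0) ^ d i = 0 :=
        Finset.prod_eq_zero hj₀ (by
          rw [if_neg hj₀S, zero_pow (Finsupp.mem_support_iff.mp hj₀)])
      have e2 : ∏ i ∈ d.support, (if S i then 0 else v i) ^ d i = 0 :=
        Finset.prod_eq_zero hi₀ (by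
          rw [if_pos hi₀S, zero_pow (Finsupp.mem_support_iff.mp hi₀)])
      have e3 : ∏ i ∈ d.support, (0 : B) ^ d i = 0 :=
        Finset.prod_eq_zero hi₀ (zero_pow (Finsupp.mem_support_iff.mp hi₀))
      simp only [e1, e2, e3, mul_zero, sub_zero, add_zero]
      have e4 : ∏ i ∈ d.support, v i ^ d i
          = v i₀ ^ d i₀ * (v j₀ ^ d j₀ * ∏ i ∈ (d.support.erase i₀).erase j₀, v i ^ d i) := by
        conv_lhs => rw [← Finset.mul_prod_erase _ _ hi₀,
          ← Finset.mul_prod_erase _ _ (Finset.mem_erase.mpr ⟨hne.symm, hj₀⟩)]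
      rw [e4]
      have : algebraMap ℤ B (coeff d φ) *
          (v i₀ ^ d i₀ * (v j₀ ^ d j₀ * ∏ i ∈ (d.support.erase i₀).erase j₀, v i ^ d i))
          = (v i₀ ^ d i₀ * v j₀ ^ d j₀) *
            (algebraMap ℤ B (coeff d φ) * ∏ i ∈ (d.support.erase i₀).erase j₀, v i ^ d i) := by
        ring
      rw [this]
      exact Ideal.mul_mem_right _ _ (Ideal.mul_mem_mul
        (I₁.pow_mem_of_mem (h1 _ hi₀S) _ (Nat.pos_of_ne_zero (Finsupp.mem_support_iff.mp hi₀)))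
        (I₂.pow_mem_of_mem (h2 _ hj₀S) _ (Nat.pos_of_ne_zero (Finsupp.mem_support_iff.mp hj₀))))
    · push_neg at hS2
      obtain ⟨i₀, hi₀, hi₀S⟩ := hS1
      have e1 : ∏ i ∈ d.support, (if S i then v i else 0) ^ d i
          = ∏ i ∈ d.support, v i ^ d i :=
        Finset.prod_congr rfl fun i hi => by rw [if_pos (hS2 i hi)]
      have e2 : ∏ i ∈ d.support, (if S i then 0 else v i) ^ d i = 0 :=
        Finset.prod_eq_zero hi₀ (by
          rw [if_pos hi₀S, zero_pow (Finsupp.mem_support_iff.mp hi₀)])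
      have e3 : ∏ i ∈ d.support, (0 : B) ^ d i = 0 :=
        Finset.prod_eq_zero hi₀ (zero_pow (Finsupp.mem_support_iff.mp hi₀))
      simp only [e1, e2, e3, mul_zero, sub_zero, add_zero, sub_self]
      exact Ideal.zero_mem _
  · by_cases hS2 : ∃ j ∈ d.support, ¬ S j
    · push_neg at hS1
      obtain ⟨j₀, hj₀, hj₀S⟩ := hS2
      have e1 : ∏ i ∈ d.support, (if S i then v i else 0) ^ d i = 0 :=
        Finset.prod_eq_zero hj₀ (by
          rw [if_neg hj₀S, zero_pow (Finsupp.mem_support_iff.mp hj₀)])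
      have e2 : ∏ i ∈ d.support, (if S i then 0 else v i) ^ d i
          = ∏ i ∈ d.support, v i ^ d i :=
        Finset.prod_congr rfl fun i hi => by rw [if_neg (hS1 i hi)]
      have e3 : ∏ i ∈ d.support, (0 : B) ^ d i = 0 :=
        Finset.prod_eq_zero hj₀ (zero_pow (Finsupp.mem_support_iff.mp hj₀))
      simp only [e1, e2, e3, mul_zero, sub_zero, add_zero, zero_sub, neg_add_cancel]
      rw [sub_self]
      exact Ideal.zero_mem _
    · push_neg at hS1 hS2
      have hemp : d.support = ∅ := by
        rw [Finset.eq_empty_iff_forall_notMem]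
        intro i hi
        exact (hS1 i hi) (hS2 i hi)
      rw [hemp]
      simp

open MvPolynomial Finset in
lemma aux_aeval_sub {σ : Type*} {B : Type*} [CommRing B]
    (φ : MvPolynomial σ ℤ) (v : σ → B) (J : Ideal B) (h : ∀ s, v s ∈ J) :
    aeval v φ - aeval (fun _ => (0 : B)) φ ∈ J := by
  classical
  have key : ∀ (w : σ → B), aeval w φ = ∑ d ∈ φ.support,
      algebraMap ℤ B (coeff d φ) * ∏ i ∈ d.support, w i ^ d i := by
    intro w
    rw [aeval_def, eval₂_eq]
  rw [key, key, ← Finset.sum_sub_distrib]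
  refine Ideal.sum_mem _ fun d _ => ?_
  rcases Finset.eq_empty_or_nonempty d.support with hemp | ⟨i₀, hi₀⟩
  · rw [hemp]
    simp
  · have e3 : ∏ i ∈ d.support, (0 : B) ^ d i = 0 :=
      Finset.prod_eq_zero hi₀ (zero_pow (Finsupp.mem_support_iff.mp hi₀))
    rw [e3, mul_zero, sub_zero]
    refine Ideal.mul_mem_left _ _ ?_
    rw [← Finset.mul_prod_erase _ _ hi₀]
    exact Ideal.mul_mem_right _ _
      (J.pow_mem_of_mem (h i₀) _ (Nat.pos_of_ne_zero (Finsupp.mem_support_iff.mp hi₀)))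

section Aux
open MvPolynomial WittVector
variable {p : ℕ} [hp : Fact p.Prime] {B : Type*} [CommRing B]

lemma wv_mul_coeff_mem (I₁ I₂ : Ideal B) (x y : WittVector p B)
    (hx : ∀ i, x.coeff i ∈ I₁) (hy : ∀ i, y.coeff i ∈ I₂) (k : ℕ) :
    (x * y).coeff k ∈ I₁ * I₂ := by
  classical
  rw [WittVector.mul_coeff]
  show aeval (Function.uncurry ![x.coeff, y.coeff]) (wittMul p k) ∈ I₁ * I₂
  set v : Fin 2 × ℕ → B := Function.uncurry ![x.coeff, y.coeff] with hv
  have hz : ((0 : WittVector p B)).coeff = fun _ => (0 : B) :=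
    funext fun j => WittVector.zero_coeff p B j
  have e1 : (fun s : Fin 2 × ℕ => if s.1 = 0 then v s else 0)
      = Function.uncurry ![x.coeff, (0 : WittVector p B).coeff] := by
    funext s
    obtain ⟨i, j⟩ := s
    fin_cases i <;> simp [hv, Function.uncurry, hz]
  have e2 : (fun s : Fin 2 × ℕ => if s.1 = 0 then 0 else v s)
      = Function.uncurry ![(0 : WittVector p B).coeff, y.coeff] := by
    funext s
    obtain ⟨i, j⟩ := s
    fin_cases i <;> simp [hv, Function.uncurry, hz]
  have e3 : (fun _ : Fin 2 × ℕ => (0 : B))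
      = Function.uncurry ![(0 : WittVector p B).coeff, (0 : WittVector p B).coeff] := by
    funext s
    obtain ⟨i, j⟩ := s
    fin_cases i <;> simp [Function.uncurry, hz]
  have z1 : aeval (fun s : Fin 2 × ℕ => if s.1 = 0 then v s else 0) (wittMul p k) = 0 := by
    rw [e1]
    show WittVector.peval (wittMul p k) ![x.coeff, (0 : WittVector p B).coeff] = 0
    rw [← WittVector.mul_coeff, mul_zero, WittVector.zero_coeff]
  have z2 : aeval (fun s : Fin 2 × ℕ => if s.1 = 0 then 0 else v s) (wittMul p k) = 0 := by
    rw [e2]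
    show WittVector.peval (wittMul p k) ![(0 : WittVector p B).coeff, y.coeff] = 0
    rw [← WittVector.mul_coeff, zero_mul, WittVector.zero_coeff]
  have z3 : aeval (fun _ : Fin 2 × ℕ => (0 : B)) (wittMul p k) = 0 := by
    rw [e3]
    show WittVector.peval (wittMul p k) ![(0 : WittVector p B).coeff, (0 : WittVector p B).coeff] = 0
    rw [← WittVector.mul_coeff, zero_mul, WittVector.zero_coeff]
  have h4 := aux_aeval_four (wittMul p k) v (fun s => s.1 = 0) I₁ I₂
    (fun s hs => by
      obtain ⟨i, j⟩ := s
      fin_cases i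
      · simpa [hv, Function.uncurry] using hx j
      · simp at hs)
    (fun s hs => by
      obtain ⟨i, j⟩ := s
      fin_cases i
      · simp at hs
      · simpa [hv, Function.uncurry] using hy j)
  rwa [z1, z2, z3, sub_zero, sub_zero, add_zero] at h4

lemma wv_add_coeff_mem (J : Ideal B) (x y : WittVector p B)
    (hx : ∀ i, x.coeff i ∈ J) (hy : ∀ i, y.coeff i ∈ J) (k : ℕ) :
    (x + y).coeff k ∈ J := by
  classical
  rw [WittVector.add_coeff]
  show aeval (Function.uncurry ![x.coeff, y.coeff]) (wittAdd p k) ∈ J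
  have hz : ((0 : WittVector p B)).coeff = fun _ => (0 : B) :=
    funext fun j => WittVector.zero_coeff p B j
  have e3 : (fun _ : Fin 2 × ℕ => (0 : B))
      = Function.uncurry ![(0 : WittVector p B).coeff, (0 : WittVector p B).coeff] := by
    funext s
    obtain ⟨i, j⟩ := s
    fin_cases i <;> simp [Function.uncurry, hz]
  have z3 : aeval (fun _ : Fin 2 × ℕ => (0 : B)) (wittAdd p k) = 0 := by
    rw [e3]
    show WittVector.peval (wittAdd p k) ![(0 : WittVector p B).coeff, (0 : WittVector p B).coeff] = 0
    rw [← WittVector.add_coeff, zero_add, WittVector.zero_coeff]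
  have h := aux_aeval_sub (wittAdd p k) (Function.uncurry ![x.coeff, y.coeff]) J
    (fun s => by
      obtain ⟨i, j⟩ := s
      fin_cases i
      · simpa [Function.uncurry] using hx j
      · simpa [Function.uncurry] using hy j)
  rwa [z3, sub_zero] at h

omit hp in
lemma twv_out_coeff_mem {n : ℕ} (J : Ideal B) (x : TruncatedWittVector p n B)
    (hx : ∀ i, x.coeff i ∈ J) (j : ℕ) : x.out.coeff j ∈ J := by
  have h : x.out.coeff j = if h : j < n then x.coeff ⟨j, h⟩ else 0 := rfl
  rw [h]
  split_ifs
  · exact hx _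
  · exact J.zero_mem

lemma twv_mul_coeff_mem {n : ℕ} (I₁ I₂ : Ideal B) (x y : TruncatedWittVector p n B)
    (hx : ∀ i, x.coeff i ∈ I₁) (hy : ∀ i, y.coeff i ∈ I₂) (i : Fin n) :
    (x * y).coeff i ∈ I₁ * I₂ := by
  have h : x * y = WittVector.truncateFun n (x.out * y.out) := rfl
  rw [h, WittVector.coeff_truncateFun]
  exact wv_mul_coeff_mem I₁ I₂ _ _ (twv_out_coeff_mem I₁ x hx) (twv_out_coeff_mem I₂ y hy) i

lemma twv_add_coeff_mem {n : ℕ} (J : Ideal B) (x y : TruncatedWittVector p n B)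
    (hx : ∀ i, x.coeff i ∈ J) (hy : ∀ i, y.coeff i ∈ J) (i : Fin n) :
    (x + y).coeff i ∈ J := by
  have h : x + y = WittVector.truncateFun n (x.out + y.out) := rfl
  rw [h, WittVector.coeff_truncateFun]
  exact wv_add_coeff_mem J _ _ (twv_out_coeff_mem J x hx) (twv_out_coeff_mem J y hy) i

/-- The ideal of truncated Witt vectors all of whose coefficients lie in `J`. -/
def wittIdeal (p : ℕ) [Fact p.Prime] (n : ℕ) {B : Type*} [CommRing B] (J : Ideal B) :
    Ideal (TruncatedWittVector p n B) where
  carrier := {x | ∀ i, x.coeff i ∈ J}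
  zero_mem' := fun i => by
    rw [TruncatedWittVector.coeff_zero]
    exact J.zero_mem
  add_mem' := fun {a b} ha hb i => twv_add_coeff_mem J a b ha hb i
  smul_mem' := fun c x hx => by
    intro i
    rw [smul_eq_mul]
    have := twv_mul_coeff_mem ⊤ J c x (fun _ => trivial) hx i
    rwa [Ideal.top_mul] at this

lemma mem_wittIdeal {n : ℕ} (J : Ideal B) (x : TruncatedWittVector p n B) :
    x ∈ wittIdeal p n J ↔ ∀ i, x.coeff i ∈ J := Iff.rfl

end Aux

/-- Let `I ⊆ B` be an ideal with `Iᵐ = 0`.  Then the ideal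
`W_n(I) = {x ∈ W_n(B) : xᵢ ∈ I for all i}` of the length-`n` `p`-typical Witt
vectors — i.e. the kernel of the natural (componentwise) ring homomorphism
`W_n(B) → W_n(B/I)` — is nilpotent. -/
theorem truncatedWittVector_ideal_nilpotent (p : ℕ) [Fact p.Prime] (n : ℕ)
    {B : Type*} [CommRing B] (I : Ideal B) (m : ℕ) (hm : I ^ m = ⊥)
    (g : TruncatedWittVector p n B →+* TruncatedWittVector p n (B ⧸ I))
    (hg : ∀ (x : TruncatedWittVector p n B) (i : Fin n),
      (g x).coeff i = Ideal.Quotient.mk I (x.coeff i)) :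
    (∀ x : TruncatedWittVector p n B, g x = 0 ↔ ∀ i, x.coeff i ∈ I) ∧
    IsNilpotent (RingHom.ker g) := by
  have part1 : ∀ x : TruncatedWittVector p n B, g x = 0 ↔ ∀ i, x.coeff i ∈ I := by
    intro x
    constructor
    · intro h i
      have h2 : (g x).coeff i = 0 := by rw [h, TruncatedWittVector.coeff_zero]
      rw [hg] at h2
      exact Ideal.Quotient.eq_zero_iff_mem.mp h2
    · intro h
      ext i
      rw [hg x i, TruncatedWittVector.coeff_zero]
      exact Ideal.Quotient.eq_zero_iff_mem.mpr (h i)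
  refine ⟨part1, m + 1, ?_⟩
  have hker : RingHom.ker g ≤ wittIdeal p n I := by
    intro x hx
    exact (part1 x).mp (RingHom.mem_ker.mp hx)
  have step : ∀ k, (RingHom.ker g) ^ (k + 1) ≤ wittIdeal p n (I ^ (k + 1)) := by
    intro k
    induction k with
    | zero => simpa [pow_one] using hker
    | succ k ih =>
      rw [pow_succ]
      refine Ideal.mul_le.mpr fun r hr s hs => ?_
      intro i
      rw [pow_succ]
      exact twv_mul_coeff_mem _ _ r s (ih hr) (hker hs) i
  have hbot : (RingHom.ker g) ^ (m + 1) = ⊥ := by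
    refine eq_bot_iff.mpr fun x hx => ?_
    have h := step m hx
    rw [Ideal.mem_bot]
    ext i
    rw [TruncatedWittVector.coeff_zero]
    have h2 := h i
    rw [pow_succ, hm, Ideal.bot_mul] at h2
    exact (Submodule.mem_bot B).mp h2
  rw [Ideal.zero_eq_bot]
  exact hbot
end

section
/- There exist polynomials P_n ∈ O[T, T', …, T⁽ⁿ⁾] with P₀ = T, P₁ = T', satisfying the recursion P_n = P_{n-1}^δ + Σ_{i=0}^{n-2} Σ_{j=1}^{q^{n-1-i}} π^{i+j-n}·C(q^{n-1-i}, j)·P_i^{q(q^{n-1-i}-j)}·(P_i^δ)^j (with all coefficients π^{i+j-n}·C(q^{n-1-i},j) in O), such that for any O-algebra with π-derivation (B, δ) and any b ∈ B, the canonical section exp_δ : B → W_{π,q}(B) has Witt components exp_δ(b) = (P₀(b), P₁(b), P₂(b), …), where P_n(b) := P_n(b, δb, …, δⁿb). -/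
open MvPolynomial


namespace ExpDeltaAux

variable {O : Type*} [CommRing O]

noncomputable def phi (π : O) (q : ℕ) : MvPolynomial ℕ O →ₐ[O] MvPolynomial ℕ O :=
  aeval (fun i : ℕ => X i ^ q + C π * X (i + 1))

open Classical in
noncomputable def body (π : O) (q : ℕ) (f : ℕ → MvPolynomial ℕ O) (n : ℕ) :
    MvPolynomial ℕ O :=
  if h : ∃ Q, (C π : MvPolynomial ℕ O) ^ n * Q =
      (phi π q)^[n] (X 0) -
        ∑ i ∈ Finset.range n, (C π : MvPolynomial ℕ O) ^ i * f i ^ q ^ (n - i)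
  then h.choose else 0

noncomputable def aux (π : O) (q : ℕ) : ℕ → ℕ → MvPolynomial ℕ O
  | 0 => fun _ => 0
  | n + 1 => fun m => if m = n then body π q (aux π q n) n else aux π q n m

noncomputable def P (π : O) (q : ℕ) (n : ℕ) : MvPolynomial ℕ O := aux π q (n + 1) n

lemma body_congr (π : O) (q : ℕ) {f g : ℕ → MvPolynomial ℕ O} (n : ℕ)
    (h : ∀ i < n, f i = g i) : body π q f n = body π q g n := by
  have hs : (∑ i ∈ Finset.range n, (C π : MvPolynomial ℕ O) ^ i * f i ^ q ^ (n - i)) =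
      ∑ i ∈ Finset.range n, (C π : MvPolynomial ℕ O) ^ i * g i ^ q ^ (n - i) :=
    Finset.sum_congr rfl fun i hi => by rw [h i (Finset.mem_range.mp hi)]
  unfold body
  rw [hs]

lemma aux_eq (π : O) (q : ℕ) : ∀ n m, m < n → aux π q n m = P π q m := by
  intro n
  induction n with
  | zero => intro m hm; omega
  | succ n ih =>
    intro m hm
    rcases eq_or_lt_of_le (Nat.lt_succ_iff.mp hm) with hEq | hlt
    · subst hEq
      show (if m = m then body π q (aux π q m) m else aux π q m m) = P π q m
      rw [if_pos rfl]
      show _ = aux π q (m + 1) m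
      show _ = (if m = m then body π q (aux π q m) m else aux π q m m)
      rw [if_pos rfl]
    · show (if m = n then body π q (aux π q n) n else aux π q n m) = P π q m
      rw [if_neg (by omega), ih m hlt]

lemma P_eq_body (π : O) (q : ℕ) (n : ℕ) : P π q n = body π q (P π q) n := by
  have h1 : P π q n = body π q (aux π q n) n := by
    show (if n = n then body π q (aux π q n) n else aux π q n n) = _
    rw [if_pos rfl]
  rw [h1]
  exact body_congr π q n fun i hi => aux_eq π q n i hi

lemma dvd_pow_sub_pow {R : Type*} [CommRing R] {x : R} {q : ℕ} (hq : x ∣ (q : R))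
    {a b : R} (h : x ∣ a - b) : ∀ k : ℕ, x ^ (k + 1) ∣ a ^ q ^ k - b ^ q ^ k := by
  have step : ∀ (c d : R) (m : ℕ), x ∣ c - d → x ^ m ∣ c - d →
      x ^ (m + 1) ∣ c ^ q - d ^ q := by
    intro c d m h1 hm
    have hgeom : (∑ i ∈ Finset.range q, c ^ i * d ^ (q - 1 - i)) * (c - d) = c ^ q - d ^ q :=
      geom_sum₂_mul c d q
    have hS : x ∣ ∑ i ∈ Finset.range q, c ^ i * d ^ (q - 1 - i) := by
      have hterm : ∀ i ∈ Finset.range q, x ∣ c ^ i * d ^ (q - 1 - i) - d ^ (q - 1) := by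
        intro i hi
        have hiq : i < q := Finset.mem_range.mp hi
        have h2 : x ∣ c ^ i - d ^ i := h1.trans (sub_dvd_pow_sub_pow c d i)
        have h3 : d ^ i * d ^ (q - 1 - i) = d ^ (q - 1) := by
          rw [← pow_add]; congr 1; omega
        calc x ∣ (c ^ i - d ^ i) * d ^ (q - 1 - i) := h2.mul_right _
          _ = c ^ i * d ^ (q - 1 - i) - d ^ (q - 1) := by rw [sub_mul, h3]
      have hsub : x ∣ (∑ i ∈ Finset.range q, c ^ i * d ^ (q - 1 - i)) -
          (q : R) * d ^ (q - 1) := by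
        have : (∑ i ∈ Finset.range q, c ^ i * d ^ (q - 1 - i)) - (q : R) * d ^ (q - 1) =
            ∑ i ∈ Finset.range q, (c ^ i * d ^ (q - 1 - i) - d ^ (q - 1)) := by
          rw [Finset.sum_sub_distrib, Finset.sum_const, Finset.card_range, nsmul_eq_mul]
        rw [this]
        exact Finset.dvd_sum hterm
      have hq' : x ∣ (q : R) * d ^ (q - 1) := hq.mul_right _
      have := dvd_add hsub hq'
      simpa using this
    have := mul_dvd_mul hS hm
    rw [hgeom] at this
    rwa [pow_succ']
    -- x^(m+1) = x * x^m
  intro k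
  induction k with
  | zero => simpa using h
  | succ k ih =>
    have h1 : x ∣ a ^ q ^ k - b ^ q ^ k :=
      (dvd_pow_self x (Nat.succ_ne_zero k)).trans ih
    have h2 := step (a ^ q ^ k) (b ^ q ^ k) (k + 1) h1 ih
    rwa [← pow_mul, ← pow_mul, ← pow_succ] at h2

lemma add_pow_sub {R : Type*} [CommRing R] (x y : R) (N : ℕ) :
    (x + y) ^ N - x ^ N =
      ∑ j ∈ Finset.Icc 1 N, (N.choose j : R) * x ^ (N - j) * y ^ j := by
  have h1 : (x + y) ^ N = ∑ k ∈ Finset.range (N + 1), y ^ k * x ^ (N - k) * (N.choose k : R) := by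
    rw [add_comm x y]; exact add_pow y x N
  rw [h1, Finset.sum_range_succ']
  rw [show Finset.Icc 1 N = Finset.Ico 1 (N + 1) from by rw [Finset.Ico_add_one_right_eq_Icc],
    Finset.sum_Ico_eq_sum_range]
  simp only [Nat.add_sub_cancel, pow_zero, Nat.choose_zero_right, Nat.cast_one, one_mul,
    mul_one, Nat.sub_zero]
  rw [add_sub_cancel_right]
  apply Finset.sum_congr rfl
  intro i _
  rw [add_comm 1 i]
  ring

end ExpDeltaAux

/-- There exist polynomials `P_n ∈ O[T, T', …, T⁽ⁿ⁾]` with `P₀ = T`, `P₁ = T'`,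
satisfying the recursion
`P_n = P_{n-1}^δ + Σ_{i=0}^{n-2} Σ_{j=1}^{q^{n-1-i}} π^{i+j-n}·C(q^{n-1-i},j)·P_i^{q(q^{n-1-i}-j)}·(P_i^δ)^j`
(stated multiplied through by `π^n`, together with the integrality
`π^{n-i-j} ∣ C(q^{n-1-i},j)` in `O` of the coefficients), such that for any
`O`-algebra with `π`-derivation `(B, δ)` and any `b ∈ B`, the canonical section
`exp_δ : B → W_{π,q}(B)` has Witt components `(P₀(b), P₁(b), P₂(b), …)`;
equivalently (via the ghost map), for all `n`:
`Σ_{i=0}^{n} π^i·P_i(b)^{q^{n-i}} = φⁿ(b)` where `φ(b) = b^q + πδ(b)` and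
`P_i(b) := P_i(b, δb, …, δⁱb)`. -/
theorem exp_delta_witt_components
    {O : Type*} [CommRing O] [IsDomain O] [IsDiscreteValuationRing O]
    (π : O) (hπ : Irreducible π) (p h e q : ℕ) (hp : p.Prime) (hh : 1 ≤ h)
    (he : 1 ≤ e) (hq : q = p ^ h) (hpe : Associated ((p : O)) (π ^ e))
    (δA : MvPolynomial ℕ O → MvPolynomial ℕ O)
    (hδA : ∀ Q, MvPolynomial.C π * δA Q =
      aeval (fun i : ℕ => X i ^ q + MvPolynomial.C π * X (i + 1)) Q - Q ^ q) :
    ∃ P : ℕ → MvPolynomial ℕ O,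
      P 0 = X 0 ∧ P 1 = X 1 ∧
      (∀ n i j : ℕ, 2 ≤ n → i ≤ n - 2 → 1 ≤ j → j ≤ q ^ (n - 1 - i) →
        π ^ (n - i - j) ∣ (((q ^ (n - 1 - i)).choose j : ℕ) : O)) ∧
      (∀ (n : ℕ) (hn : 2 ≤ n),
        (MvPolynomial.C π : MvPolynomial ℕ O) ^ n * P n =
          (MvPolynomial.C π : MvPolynomial ℕ O) ^ n * δA (P (n - 1)) +
          ∑ i ∈ Finset.range (n - 1), ∑ j ∈ Finset.Icc 1 (q ^ (n - 1 - i)),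
            (MvPolynomial.C π : MvPolynomial ℕ O) ^ (i + j) *
              MvPolynomial.C (((q ^ (n - 1 - i)).choose j : ℕ) : O) *
              (P i) ^ (q * (q ^ (n - 1 - i) - j)) * (δA (P i)) ^ j) ∧
      (∀ (B : Type) [CommRing B] [Algebra O B] (δ : B → B) (Cb : B → B → B),
        (∀ x y, algebraMap O B π * Cb x y = x ^ q + y ^ q - (x + y) ^ q) →
        (∀ x y, δ (x + y) = δ x + δ y + Cb x y) →
        (∀ x y, δ (x * y) = x ^ q * δ y + y ^ q * δ x +
          algebraMap O B π * (δ x * δ y)) →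
        (∀ a : O, algebraMap O B π * δ (algebraMap O B a) =
          algebraMap O B a - (algebraMap O B a) ^ q) →
        ∀ (b : B) (n : ℕ),
          ∑ i ∈ Finset.range (n + 1),
            algebraMap O B π ^ i *
              (aeval (fun k : ℕ => δ^[k] b) (P i)) ^ (q ^ (n - i)) =
          (fun x => x ^ q + algebraMap O B π * δ x)^[n] b) := by
  classical
  have hq0 : q ≠ 0 := by subst hq; exact pow_ne_zero _ hp.pos.ne'
  have hπp : π ∣ (p : O) := (dvd_pow_self π (by omega : e ≠ 0)).trans hpe.symm.dvd
  have hπq : π ∣ (q : O) := by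
    have hcast : (q : O) = (p : O) ^ h := by subst hq; push_cast; ring
    rw [hcast]
    exact hπp.trans (dvd_pow_self _ (by omega))
  have hCπq : (C π : MvPolynomial ℕ O) ∣ (q : MvPolynomial ℕ O) := by
    have := map_dvd (C : O →+* MvPolynomial ℕ O) hπq
    simpa using this
  have hSd : ∀ Q : MvPolynomial ℕ O,
      ExpDeltaAux.phi π q Q = Q ^ q + C π * δA Q := by
    intro Q
    have := hδA Q
    show aeval (fun i : ℕ => X i ^ q + C π * X (i + 1)) Q = _
    linear_combination -this
  set P : ℕ → MvPolynomial ℕ O := ExpDeltaAux.P π q with hPdef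
  have main : ∀ n, (C π : MvPolynomial ℕ O) ^ n * P n =
      (ExpDeltaAux.phi π q)^[n] (X 0) -
        ∑ i ∈ Finset.range n, (C π : MvPolynomial ℕ O) ^ i * P i ^ q ^ (n - i) := by
    intro n
    induction n using Nat.strong_induction_on with
    | _ n ih =>
      have hghost : ∀ m, m < n →
          ∑ i ∈ Finset.range (m + 1), (C π : MvPolynomial ℕ O) ^ i * P i ^ q ^ (m - i) =
            (ExpDeltaAux.phi π q)^[m] (X 0) := by
        intro m hm
        have h1 := ih m hm
        rw [Finset.sum_range_succ, Nat.sub_self, pow_zero, pow_one]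
        linear_combination h1
      have hex : ∃ Q, (C π : MvPolynomial ℕ O) ^ n * Q =
          (ExpDeltaAux.phi π q)^[n] (X 0) -
            ∑ i ∈ Finset.range n, (C π : MvPolynomial ℕ O) ^ i * P i ^ q ^ (n - i) := by
        rcases n with _ | m
        · exact ⟨X 0, by simp⟩
        · have hg := hghost m (Nat.lt_succ_self m)
          have hdvd : (C π : MvPolynomial ℕ O) ^ (m + 1) ∣
              (ExpDeltaAux.phi π q)^[m + 1] (X 0) -
                ∑ i ∈ Finset.range (m + 1),
                  (C π : MvPolynomial ℕ O) ^ i * P i ^ q ^ (m + 1 - i) := by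
            rw [Function.iterate_succ_apply', ← hg, map_sum, ← Finset.sum_sub_distrib]
            apply Finset.dvd_sum
            intro i hi
            have hi' : i ≤ m := Nat.lt_succ_iff.mp (Finset.mem_range.mp hi)
            have e1 : ExpDeltaAux.phi π q ((C π : MvPolynomial ℕ O) ^ i * P i ^ q ^ (m - i)) =
                (C π : MvPolynomial ℕ O) ^ i *
                  (ExpDeltaAux.phi π q (P i)) ^ q ^ (m - i) := by
              rw [map_mul, map_pow, map_pow]
              congr 2
              show aeval (fun i : ℕ => X i ^ q + C π * X (i + 1)) (C π) = C π
              simp [algebraMap_eq]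
            rw [e1]
            have e2 : P i ^ q ^ (m + 1 - i) = (P i ^ q) ^ q ^ (m - i) := by
              rw [← pow_mul]
              congr 1
              rw [show m + 1 - i = (m - i) + 1 from by omega, pow_succ]
              ring
            rw [e2, ← mul_sub,
              show (C π : MvPolynomial ℕ O) ^ (m + 1) =
                (C π : MvPolynomial ℕ O) ^ i * (C π : MvPolynomial ℕ O) ^ ((m - i) + 1) from by
                  rw [← pow_add]; congr 1; omega]
            apply mul_dvd_mul_left
            exact ExpDeltaAux.dvd_pow_sub_pow hCπq
              ⟨δA (P i), by linear_combination (hSd (P i))⟩ (m - i)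
          obtain ⟨Q, hQ⟩ := hdvd
          exact ⟨Q, hQ.symm⟩
      have hPn : P n = ExpDeltaAux.body π q P n := ExpDeltaAux.P_eq_body π q n
      rw [hPn]
      unfold ExpDeltaAux.body
      rw [dif_pos hex]
      exact hex.choose_spec
  have ghost : ∀ n, ∑ i ∈ Finset.range (n + 1),
      (C π : MvPolynomial ℕ O) ^ i * P i ^ q ^ (n - i) =
        (ExpDeltaAux.phi π q)^[n] (X 0) := by
    intro n
    have h1 := main n
    rw [Finset.sum_range_succ, Nat.sub_self, pow_zero, pow_one]
    linear_combination h1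
  have hCne : (C π : MvPolynomial ℕ O) ≠ 0 := by
    simpa using hπ.ne_zero
  have hP0 : P 0 = X 0 := by
    have := main 0
    simpa using this
  have hP1 : P 1 = X 1 := by
    have h1 := main 1
    rw [Function.iterate_one] at h1
    have h2 : ExpDeltaAux.phi π q (X 0) = X 0 ^ q + C π * X 1 := by
      show aeval (fun i : ℕ => X i ^ q + C π * X (i + 1)) (X 0) = _
      simp
    rw [h2] at h1
    simp only [Finset.sum_range_one, pow_zero, one_mul, pow_one, hP0] at h1
    have h3 : C π * P 1 = C π * X 1 := by linear_combination h1
    exact mul_left_cancel₀ hCne h3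
  refine ⟨P, hP0, hP1, ?_, ?_, ?_⟩
  · -- integrality
    intro n i j hn hi hj1 hj2
    rcases le_or_gt (n - i) j with hcase | hcase
    · rw [show n - i - j = 0 from by omega, pow_zero]
      exact one_dvd _
    · set m := n - 1 - i with hm
      have hm1 : 1 ≤ m := by omega
      have hqm : q ^ m = p ^ (h * m) := by subst hq; rw [← pow_mul]
      set t := h * m with ht
      have hmt : m ≤ t := Nat.le_mul_of_pos_left m (by omega)
      set Cn := (p ^ t).choose j with hCnd
      have hjle : j ≤ p ^ t := by rw [hqm] at hj2; omega
      have hCpos : 0 < Cn := Nat.choose_pos hjle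
      have hppos : 0 < p ^ t := pow_pos hp.pos t
      have hkey : p ^ t * (p ^ t - 1).choose (j - 1) = Cn * j := by
        have hkey0 := Nat.add_one_mul_choose_eq (p ^ t - 1) (j - 1)
        rw [show p ^ t - 1 + 1 = p ^ t from by omega,
          show j - 1 + 1 = j from by omega] at hkey0
        exact hkey0
      have hdvdCj : p ^ t ∣ Cn * j := ⟨(p ^ t - 1).choose (j - 1), hkey.symm⟩
      have hft : t ≤ (Cn * j).factorization p :=
        (Nat.Prime.pow_dvd_iff_le_factorization hp (by positivity)).mp hdvdCj
      rw [Nat.factorization_mul hCpos.ne' (by omega)] at hft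
      simp only [Finsupp.add_apply] at hft
      set fj := j.factorization p with hfjd
      have hfdvd : p ^ fj ∣ j := Nat.ordProj_dvd j p
      have hfjle : fj ≤ j - 1 := by
        have h2f : fj < 2 ^ fj := Nat.lt_two_pow_self (n := fj)
        have h2p : 2 ^ fj ≤ p ^ fj := Nat.pow_le_pow_left hp.two_le fj
        have hple : p ^ fj ≤ j := Nat.le_of_dvd (by omega) hfdvd
        omega
      have hdvdC : p ^ (t - fj) ∣ Cn :=
        (Nat.Prime.pow_dvd_iff_le_factorization hp hCpos.ne').mpr (by omega)
      have hO : π ^ (t - fj) ∣ (Cn : O) := by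
        have h1 : ((p : O)) ^ (t - fj) ∣ (Cn : O) := by
          have h2 := Nat.cast_dvd_cast (α := O) hdvdC
          push_cast at h2
          exact h2
        exact dvd_trans (pow_dvd_pow_of_dvd hπp _) h1
      have hgoalCn : (q ^ (n - 1 - i)).choose j = Cn := by rw [← hm, hqm]
      rw [hgoalCn]
      exact dvd_trans (pow_dvd_pow π (by omega : n - i - j ≤ t - fj)) hO
  · -- recursion
    intro n hn
    obtain ⟨m, rfl⟩ : ∃ m, n = m + 1 := ⟨n - 1, by omega⟩
    have hm1 : 1 ≤ m := by omega
    have e0 := main (m + 1)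
    rw [Function.iterate_succ_apply', ← ghost m, map_sum, ← Finset.sum_sub_distrib] at e0
    have e1 : ∀ i ∈ Finset.range (m + 1),
        ExpDeltaAux.phi π q ((C π : MvPolynomial ℕ O) ^ i * P i ^ q ^ (m - i)) -
          (C π : MvPolynomial ℕ O) ^ i * P i ^ q ^ (m + 1 - i) =
        (C π : MvPolynomial ℕ O) ^ i *
          ∑ j ∈ Finset.Icc 1 (q ^ (m - i)),
            ((q ^ (m - i)).choose j : MvPolynomial ℕ O) * (P i ^ q) ^ (q ^ (m - i) - j) *
              (C π * δA (P i)) ^ j := by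
      intro i hi
      have hi' : i ≤ m := Nat.lt_succ_iff.mp (Finset.mem_range.mp hi)
      have eC : ExpDeltaAux.phi π q ((C π : MvPolynomial ℕ O) ^ i * P i ^ q ^ (m - i)) =
          (C π : MvPolynomial ℕ O) ^ i * (P i ^ q + C π * δA (P i)) ^ q ^ (m - i) := by
        rw [map_mul, map_pow, map_pow, hSd (P i)]
        congr 2
        show aeval (fun i : ℕ => X i ^ q + C π * X (i + 1)) (C π) = C π
        simp [algebraMap_eq]
      have e2 : P i ^ q ^ (m + 1 - i) = (P i ^ q) ^ q ^ (m - i) := by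
        rw [← pow_mul]
        congr 1
        rw [show m + 1 - i = (m - i) + 1 from by omega, pow_succ]
        ring
      rw [eC, e2, ← mul_sub, ExpDeltaAux.add_pow_sub]
    rw [Finset.sum_congr rfl e1, Finset.sum_range_succ] at e0
    simp only [Nat.sub_self, pow_zero, Finset.Icc_self, Finset.sum_singleton,
      Nat.choose_self, Nat.cast_one, one_mul, pow_one] at e0
    have final : (∑ i ∈ Finset.range m, (C π : MvPolynomial ℕ O) ^ i *
          ∑ j ∈ Finset.Icc 1 (q ^ (m - i)),
            ((q ^ (m - i)).choose j : MvPolynomial ℕ O) * (P i ^ q) ^ (q ^ (m - i) - j) *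
              (C π * δA (P i)) ^ j) =
        ∑ i ∈ Finset.range m, ∑ j ∈ Finset.Icc 1 (q ^ (m - i)),
          (C π : MvPolynomial ℕ O) ^ (i + j) *
            MvPolynomial.C (((q ^ (m - i)).choose j : ℕ) : O) *
            (P i) ^ (q * (q ^ (m - i) - j)) * (δA (P i)) ^ j := by
      apply Finset.sum_congr rfl
      intro i _
      rw [Finset.mul_sum]
      apply Finset.sum_congr rfl
      intro j _
      rw [show (((q ^ (m - i)).choose j : ℕ) : MvPolynomial ℕ O) =
          MvPolynomial.C (((q ^ (m - i)).choose j : ℕ) : O) from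
        (map_natCast (C : O →+* MvPolynomial ℕ O) _).symm]
      rw [mul_pow, ← pow_mul, pow_add]
      ring
    simp only [Nat.add_sub_cancel]
    rw [e0, final]
    ring
  · -- ghost in B
    intro B _inst1 _inst2 δ Cb hCb hadd hmul hC b n
    have hδ1 : algebraMap O B π * δ 1 = 0 := by
      have h1 := hC 1
      simpa using h1
    have hδ0 : algebraMap O B π * δ 0 = 0 := by
      have h1 : δ (0 + 0 : B) = δ 0 + δ 0 + Cb 0 0 := hadd 0 0
      rw [zero_add] at h1
      have h2 : algebraMap O B π * Cb 0 0 = 0 := by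
        have := hCb 0 0
        rw [zero_add] at this
        simpa [zero_pow hq0] using this
      have h3 : algebraMap O B π * δ 0 = -(algebraMap O B π * Cb 0 0) := by
        linear_combination (-(algebraMap O B π)) * h1
      rw [h3, h2, neg_zero]
    let φB : B →+* B :=
      { toFun := fun x => x ^ q + algebraMap O B π * δ x
        map_one' := by
          show (1 : B) ^ q + algebraMap O B π * δ 1 = 1
          rw [one_pow, hδ1, add_zero]
        map_mul' := fun x y => by
          show (x * y) ^ q + algebraMap O B π * δ (x * y) =
            (x ^ q + algebraMap O B π * δ x) * (y ^ q + algebraMap O B π * δ y)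
          rw [hmul]; ring
        map_zero' := by
          show (0 : B) ^ q + algebraMap O B π * δ 0 = 0
          rw [zero_pow hq0, hδ0, add_zero]
        map_add' := fun x y => by
          show (x + y) ^ q + algebraMap O B π * δ (x + y) =
            (x ^ q + algebraMap O B π * δ x) + (y ^ q + algebraMap O B π * δ y)
          rw [hadd]; linear_combination hCb x y }
    have hcomm : ∀ Q : MvPolynomial ℕ O,
        aeval (fun k : ℕ => δ^[k] b) (ExpDeltaAux.phi π q Q) =
          φB (aeval (fun k : ℕ => δ^[k] b) Q) := by
      intro Q
      have hext : RingHom.comp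
            (↑(aeval (R := O) (fun k : ℕ => δ^[k] b)) : MvPolynomial ℕ O →+* B)
            (↑(ExpDeltaAux.phi π q) : MvPolynomial ℕ O →+* MvPolynomial ℕ O) =
          RingHom.comp φB
            (↑(aeval (R := O) (fun k : ℕ => δ^[k] b)) : MvPolynomial ℕ O →+* B) := by
        apply MvPolynomial.ringHom_ext
        · intro r
          simp only [RingHom.coe_comp, Function.comp_apply, AlgHom.coe_toRingHom]
          rw [show ExpDeltaAux.phi π q (C r) = C r from by
            show aeval (fun i : ℕ => X i ^ q + C π * X (i + 1)) (C r) = C r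
            simp [algebraMap_eq]]
          rw [aeval_C]
          show algebraMap O B r =
            (algebraMap O B r) ^ q + algebraMap O B π * δ (algebraMap O B r)
          linear_combination -(hC r)
        · intro i
          simp only [RingHom.coe_comp, Function.comp_apply, AlgHom.coe_toRingHom]
          rw [show ExpDeltaAux.phi π q (X i) = X i ^ q + C π * X (i + 1) from by
            show aeval (fun i : ℕ => X i ^ q + C π * X (i + 1)) (X i) = _
            simp]
          rw [map_add, map_mul, map_pow, aeval_X, aeval_X, aeval_C]
          show (δ^[i] b) ^ q + algebraMap O B π * δ^[i + 1] b =
            (δ^[i] b) ^ q + algebraMap O B π * δ (δ^[i] b)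
          rw [Function.iterate_succ_apply']
      exact RingHom.congr_fun hext Q
    have hiter : ∀ k : ℕ, aeval (fun k : ℕ => δ^[k] b) ((ExpDeltaAux.phi π q)^[k] (X 0)) =
        (fun x => x ^ q + algebraMap O B π * δ x)^[k] b := by
      intro k
      induction k with
      | zero => simp
      | succ k ih =>
        rw [Function.iterate_succ_apply', Function.iterate_succ_apply', hcomm, ih]
        rfl
    have key := congrArg (aeval (R := O) (fun k : ℕ => δ^[k] b)) (ghost n)
    rw [map_sum] at key
    simp only [map_mul, map_pow, aeval_C] at key
    rw [hiter n] at key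
    exact key
end

section
/- Let A be a commutative ring with a p-derivation δ and associated Frobenius lift φ(a) = a^p + p·δ(a). Then the ghost components of the sequence (P₀(a), P₁(a), …, P_n(a)) equal (a, φ(a), …, φⁿ(a)): that is, Σ_{i=0}^{n} p^i · P_i(a)^{p^{n-i}} = φⁿ(a) for all n ≥ 0 and a ∈ A, where P_i(a) are defined by P₀(a) = a, P₁(a) = δ(a), and the recursion pⁿ·P_n(a) = pⁿ·δ(P_{n-1}(a)) + Σ_{i=0}^{n-2} Σ_{j=1}^{p^{n-1-i}} p^{i+j}·C(p^{n-1-i},j)·P_i(a)^{p(p^{n-1-i}-j)}·δ(P_i(a))^j. -/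
private lemma sum_split01 (m : ℕ) {A : Type*} [CommRing A] (g : ℕ → A) :
    ∑ j ∈ Finset.range (m+1), g j = g 0 + ∑ j ∈ Finset.Icc 1 m, g j := by
  have h : Finset.range (m+1) = insert 0 (Finset.Icc 1 m) := by
    ext x
    simp only [Finset.mem_range, Finset.mem_Icc, Finset.mem_insert, Nat.lt_succ_iff]
    omega
  rw [h, Finset.sum_insert (by simp)]

/-- Let `A` be a `p`-torsion-free commutative ring with a `p`-derivation `δ`
and Frobenius lift `φ(a) = a^p + p·δ(a)`.  Then the ghost components of
`(P₀(a), …, P_n(a))` equal `(a, φ(a), …, φⁿ(a))`: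
`Σ_{i=0}^{n} p^i·P_i(a)^{p^{n-i}} = φⁿ(a)`, where `P₀(a) = a`, `P₁(a) = δ(a)`
and `pⁿ·P_n(a) = pⁿ·δ(P_{n-1}(a)) + Σ_{i=0}^{n-2} Σ_{j=1}^{p^{n-1-i}}
p^{i+j}·C(p^{n-1-i},j)·P_i(a)^{p(p^{n-1-i}-j)}·δ(P_i(a))^j`. -/
theorem ghost_components_of_P (p : ℕ) (hp : p.Prime)
    {A : Type*} [CommRing A]
    (htf : ∀ a : A, (p : A) * a = 0 → a = 0)
    (δ : A → A) (C : A → A → A)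
    (hC : ∀ x y, (p : A) * C x y = x ^ p + y ^ p - (x + y) ^ p)
    (hadd : ∀ x y, δ (x + y) = δ x + δ y + C x y)
    (hmul : ∀ x y, δ (x * y) = x ^ p * δ y + y ^ p * δ x + (p : A) * (δ x * δ y))
    (a : A) (P : ℕ → A) (hP0 : P 0 = a) (hP1 : P 1 = δ a)
    (hrec : ∀ n : ℕ, 2 ≤ n →
      (p : A) ^ n * P n = (p : A) ^ n * δ (P (n - 1)) +
        ∑ i ∈ Finset.range (n - 1), ∑ j ∈ Finset.Icc 1 (p ^ (n - 1 - i)),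
          (p : A) ^ (i + j) * (((p ^ (n - 1 - i)).choose j : ℕ) : A) *
            (P i) ^ (p * (p ^ (n - 1 - i) - j)) * (δ (P i)) ^ j) :
    ∀ n : ℕ,
      ∑ i ∈ Finset.range (n + 1), (p : A) ^ i * (P i) ^ (p ^ (n - i)) =
        (fun x => x ^ p + (p : A) * δ x)^[n] a := by
  set φ : A → A := fun x => x ^ p + (p : A) * δ x with hφdef
  have hφ : ∀ x, φ x = x ^ p + (p : A) * δ x := fun _ => rfl
  have hφadd : ∀ x y, φ (x + y) = φ x + φ y := by
    intro x y
    rw [hφ, hφ, hφ]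
    linear_combination (p : A) * hadd x y + hC x y
  have hφmul : ∀ x y, φ (x * y) = φ x * φ y := by
    intro x y
    rw [hφ, hφ, hφ]
    linear_combination (p : A) * hmul x y
  let Φ : A →+ A := AddMonoidHom.mk' φ hφadd
  have hΦ : ∀ x, Φ x = φ x := fun _ => rfl
  have hφpow : ∀ (x : A) (k : ℕ), 1 ≤ k → φ (x ^ k) = φ x ^ k := by
    intro x k hk
    induction k with
    | zero => omega
    | succ k ih =>
      rcases Nat.eq_zero_or_pos k with h0 | h1
      · subst h0; simp
      · rw [pow_succ, hφmul, ih h1, pow_succ]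
  have hppos : 0 < p := hp.pos
  intro n
  induction n with
  | zero => simp [hP0]
  | succ n ih =>
    rw [Function.iterate_succ_apply', ← ih]
    -- goal : ∑ i ∈ range (n+2), p^i * P i ^ p^(n+1-i) = φ (∑ i ∈ range (n+1), p^i * P i ^ p^(n-i))
    rcases Nat.eq_zero_or_pos n with h0 | hn
    · subst h0
      simp only [Finset.sum_range_succ, Finset.sum_range_zero, zero_add, pow_zero, pow_one,
        one_mul, Nat.sub_self, Nat.sub_zero, hP0, hP1, hφ]
    · -- main case: n ≥ 1, so n+1 ≥ 2
      have hexp : ∀ i ∈ Finset.range (n+1),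
          (p : A) ^ i * φ (P i ^ p ^ (n - i)) =
          (p : A) ^ i * P i ^ p ^ (n + 1 - i) +
            ∑ j ∈ Finset.Icc 1 (p ^ (n - i)),
              (p : A) ^ (i + j) * (((p ^ (n - i)).choose j : ℕ) : A) *
                (P i) ^ (p * (p ^ (n - i) - j)) * (δ (P i)) ^ j := by
        intro i hi
        have hi' : i ≤ n := Nat.lt_succ_iff.mp (Finset.mem_range.mp hi)
        have hm : 1 ≤ p ^ (n - i) := Nat.one_le_pow _ _ hppos
        rw [hφpow _ _ hm, hφ, add_comm ((P i) ^ p), add_pow]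
        rw [sum_split01]
        have hsplit : p * p ^ (n - i) = p ^ (n + 1 - i) := by
          rw [show n + 1 - i = (n - i) + 1 by omega, pow_succ]; ring
        rw [mul_add]
        congr 1
        · simp only [pow_zero, one_mul, Nat.sub_zero, Nat.choose_zero_right, Nat.cast_one,
            mul_one, ← pow_mul, hsplit]
        · rw [Finset.mul_sum]
          refine Finset.sum_congr rfl fun j hj => ?_
          rw [mul_pow, ← pow_mul, pow_add]
          ring
      have key : φ (∑ i ∈ Finset.range (n+1), (p : A) ^ i * P i ^ p ^ (n - i)) =
          ∑ i ∈ Finset.range (n+1), (p : A) ^ i * φ (P i ^ p ^ (n - i)) := by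
        rw [← hΦ, map_sum]
        refine Finset.sum_congr rfl fun i _ => ?_
        have h1 : (p : A) ^ i * P i ^ p ^ (n - i) = (p ^ i : ℕ) • (P i ^ p ^ (n - i)) := by
          simp [nsmul_eq_mul]
        rw [h1, map_nsmul, nsmul_eq_mul, hΦ]
        push_cast
        ring
      rw [key, Finset.sum_congr rfl hexp, Finset.sum_add_distrib]
      -- now handle the double sum: peel off i = n
      rw [Finset.sum_range_succ (fun i => ∑ j ∈ Finset.Icc 1 (p ^ (n - i)),
        (p : A) ^ (i + j) * (((p ^ (n - i)).choose j : ℕ) : A) *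
          (P i) ^ (p * (p ^ (n - i) - j)) * (δ (P i)) ^ j)]
      have hlast : ∑ j ∈ Finset.Icc 1 (p ^ (n - n)),
          (p : A) ^ (n + j) * (((p ^ (n - n)).choose j : ℕ) : A) *
            (P n) ^ (p * (p ^ (n - n) - j)) * (δ (P n)) ^ j = (p : A) ^ (n + 1) * δ (P n) := by
        simp [Nat.sub_self]
      rw [hlast]
      have h2 : 2 ≤ n + 1 := by omega
      have hr := hrec (n + 1) h2
      simp only [Nat.add_sub_cancel] at hr
      rw [Finset.sum_range_succ (fun i => (p : A) ^ i * P i ^ p ^ (n + 1 - i))]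
      rw [Nat.sub_self, pow_zero, pow_one]
      linear_combination hr
end
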